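/- If M is an n×n fooling-set matrix over a field k (i.e., all diagonal entries are nonzero and M_{k,ℓ}·M_{ℓ,k} = 0 for all k ≠ ℓ), then n ≤ (rank M)². -/

import Mathlib

open Matrix

/-- Rank factorization: a matrix of rank `r` factors through `Fin r`. -/
lemma exists_rank_factorization {K : Type*} [Field K] {n : ℕ}
    (M : Matrix (Fin n) (Fin n) K) :
    ∃ (C : Matrix (Fin n) (Fin M.rank) K) (R : Matrix (Fin M.rank) (Fin n) K),
      M = C * R := by
  classical
  set V : Submodule K (Fin n → K) := Submodule.span K (Set.range Mᵀ) with hV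
  have hrank : M.rank = Module.finrank K V := M.rank_eq_finrank_span_cols
  let b : Module.Basis (Fin M.rank) K V :=
    Module.finBasisOfFinrankEq K V hrank.symm
  have hmem : ∀ j, Mᵀ j ∈ V := fun j => Submodule.subset_span ⟨j, rfl⟩
  refine ⟨Matrix.of (fun i a => (b a : Fin n → K) i),
          Matrix.of (fun a j => b.repr ⟨Mᵀ j, hmem j⟩ a), ?_⟩
  ext i j
  have h := b.sum_repr ⟨Mᵀ j, hmem j⟩
  have h2 : (↑(∑ a, b.repr ⟨Mᵀ j, hmem j⟩ a • b a) : Fin n → K) i = Mᵀ j i := by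
    rw [h]
  simp only [Submodule.coe_sum, Submodule.coe_smul, Finset.sum_apply,
    Pi.smul_apply, smul_eq_mul, transpose_apply] at h2
  rw [Matrix.mul_apply]
  simp only [Matrix.of_apply]
  rw [← h2]
  exact Finset.sum_congr rfl fun a _ => mul_comm _ _

theorem fooling_set_rank_bound {K : Type*} [Field K] {n : ℕ}
    (M : Matrix (Fin n) (Fin n) K)
    (hdiag : ∀ i, M i i ≠ 0)
    (hoff : ∀ i j, i ≠ j → M i j * M j i = 0) :
    n ≤ M.rank ^ 2 := by
  classical
  set r := M.rank with hr
  obtain ⟨C, R, hM⟩ := exists_rank_factorization M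
  -- Y and Z
  let Y : Matrix (Fin n) (Fin r × Fin r) K := Matrix.of fun i p => C i p.1 * R p.2 i
  let Z : Matrix (Fin r × Fin r) (Fin n) K := Matrix.of fun p j => R p.1 j * C j p.2
  have hentry : ∀ i j, (Y * Z) i j = M i j * M j i := by
    intro i j
    rw [Matrix.mul_apply]
    have hMij : M i j = ∑ a, C i a * R a j := by
      have h := congrFun (congrFun hM i) j
      rwa [Matrix.mul_apply] at h
    have hMji : M j i = ∑ b, C j b * R b i := by
      have h := congrFun (congrFun hM j) i
      rwa [Matrix.mul_apply] at h
    rw [hMij, hMji, Finset.sum_mul_sum, ← Finset.sum_product']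
    rw [show (Finset.univ ×ˢ Finset.univ : Finset (Fin r × Fin r)) = Finset.univ from by
      simp [Finset.univ_product_univ]]
    refine Finset.sum_congr rfl fun p _ => ?_
    simp only [Y, Z, Matrix.of_apply]
    ring
  have hYZ : Y * Z = Matrix.diagonal (fun i => M i i * M i i) := by
    ext i j
    by_cases h : i = j
    · subst h; rw [hentry, Matrix.diagonal_apply_eq]
    · rw [hentry, Matrix.diagonal_apply_ne _ h, hoff i j h]
  have hn : (Y * Z).rank = n := by
    rw [hYZ, Matrix.rank_diagonal]
    have : ∀ i : Fin n, M i i * M i i ≠ 0 := fun i => mul_ne_zero (hdiag i) (hdiag i)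
    rw [Fintype.card_congr (Equiv.subtypeUnivEquiv this), Fintype.card_fin]
  have hle : (Y * Z).rank ≤ r ^ 2 := by
    calc (Y * Z).rank ≤ Y.rank := Matrix.rank_mul_le_left Y Z
    _ ≤ Fintype.card (Fin r × Fin r) := Matrix.rank_le_card_width Y
    _ = r ^ 2 := by simp [sq]
  omega
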